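/- Two-weight weak-type bound for the local fractional maximal operator: let a > 0, 1 ≤ p ≤ q < ∞, 0 ≤ α < d. If (u,v) ∈ A^{b'}_{p,q,α} for some b' > a, then there is C > 0 such that for all f and all λ > 0, γ_u({x : M^a_α f(x) > λ}) ≤ C λ^{−q} (∫_{ℝ^d} |f|^p v dγ)^{q/p}, where γ_u(E) = ∫_E u dγ and M^a_α f(x) = sup_{Q∈𝒬_a, Q∋x} γ(Q)^{α/d − 1} ∫_Q |f| dγ. -/

import Mathlib

open MeasureTheory ENNReal Set

noncomputable section

abbrev E (d : ℕ) := EuclideanSpace ℝ (Fin d)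

def gaussianM (d : ℕ) : Measure (E d) :=
  volume.withDensity fun x => ENNReal.ofReal (Real.pi ^ (-(d : ℝ)/2) * Real.exp (-‖x‖^2))

def cube (d : ℕ) (c : E d) (l : ℝ) : Set (E d) := {x | ∀ i, |x i - c i| ≤ l / 2}

def mfun {d : ℕ} (x : E d) : ℝ := if ‖x‖ ≤ 1 then 1 else 1 / ‖x‖

def adm (d : ℕ) (a : ℝ) (c : E d) (l : ℝ) : Prop := 0 < l ∧ l ≤ a * mfun c

def pconj (p : ℝ) : ℝ := p / (p - 1)

def Aconst (d : ℕ) (a p q α : ℝ) (u v : E d → ℝ≥0∞) : ℝ≥0∞ :=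
  ⨆ (c : E d) (l : ℝ) (_ : adm d a c l),
    gaussianM d (cube d c l) ^ (α/d + 1/q - 1/p) *
    ((gaussianM d (cube d c l))⁻¹ * ∫⁻ x in cube d c l, u x ∂(gaussianM d)) ^ (1/q) *
    ((gaussianM d (cube d c l))⁻¹ *
        ∫⁻ x in cube d c l, v x ^ (1 - pconj p) ∂(gaussianM d)) ^ (1/(pconj p))

open Classical in
/-- `(u,v) ∈ A^a_{p,q,α}` for `1 ≤ p`, with the essential-supremum form when `p = 1`. -/
def APair (d : ℕ) (a p q α : ℝ) (u v : E d → ℝ≥0∞) : Prop :=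
  if p = 1 then
    ∃ C : ℝ≥0∞, C ≠ ∞ ∧ ∀ (c : E d) (l : ℝ), adm d a c l →
      ∀ᵐ x ∂(gaussianM d).restrict (cube d c l),
        gaussianM d (cube d c l) ^ (α/d + 1/q - 1) *
          ((gaussianM d (cube d c l))⁻¹ *
            ∫⁻ y in cube d c l, u y ∂(gaussianM d)) ^ (1/q) ≤ C * v x
  else Aconst d a p q α u v < ∞

/-- The local fractional maximal operator
`M^a_α f(x) = sup_{Q∈𝒬_a, Q∋x} γ(Q)^{α/d-1} ∫_Q f dγ`. -/
def Mloc (d : ℕ) (a α : ℝ) (f : E d → ℝ≥0∞) (x : E d) : ℝ≥0∞ :=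
  ⨆ (c : E d) (l : ℝ) (_ : adm d a c l ∧ x ∈ cube d c l),
    gaussianM d (cube d c l) ^ (α/d - 1) * ∫⁻ y in cube d c l, f y ∂(gaussianM d)

-- ===================== auxiliary development =====================
lemma abs_sub_lt_one_of_floor_eq {a b : ℝ} (h : ⌊a⌋ = ⌊b⌋) : |a - b| < 1 := by
  have h1 := Int.floor_le a
  have h2 := Int.floor_le b
  have h3 := Int.lt_floor_add_one a
  have h4 := Int.lt_floor_add_one b
  rw [h] at h1 h3
  rw [abs_sub_lt_iff]
  constructor <;> linarith

lemma encard_le_of_injOn_mapsTo {α β : Type*} {T : Set α} {S : Set β} {F : α → β}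
    (hinj : Set.InjOn F T) (hmap : Set.MapsTo F T S) : T.encard ≤ S.encard := by
  rw [← hinj.encard_image]
  exact Set.encard_mono (Set.image_subset_iff.mpr fun x hx => hmap hx)

lemma floor_mem_Icc_of_abs_le {w : ℝ} {κ : ℝ} (h : |w| ≤ κ) :
    ⌊w⌋ ∈ Set.Icc (-(⌈κ⌉ + 1)) ⌈κ⌉ := by
  obtain ⟨h1, h2⟩ := abs_le.mp h
  constructor
  · rw [Int.le_floor]
    have hκ : κ ≤ (⌈κ⌉ : ℝ) := Int.le_ceil κ
    push_cast
    linarith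
  · have : (⌊w⌋ : ℝ) ≤ (⌈κ⌉ : ℝ) := le_trans (Int.floor_le w) (le_trans h2 (Int.le_ceil κ))
    exact_mod_cast this

set_option maxHeartbeats 2000000 in
theorem cube_covering {d : ℕ} (hd : 0 < d) {θ : ℝ} (hθ0 : 0 ≤ θ) (hθ1 : θ < 1) :
    ∃ N : ℕ, ∀ {B : ℝ}, 0 < B → ∀ (A : Set (E d)) (c : E d → E d) (R : E d → ℝ),
      (∀ x ∈ A, 0 < R x) → (∀ x ∈ A, R x ≤ B) →
      (∀ x ∈ A, ∀ i, |x i - c x i| ≤ θ * R x) →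
      ∃ ι : Set (E d), ι ⊆ A ∧ ι.Countable ∧
        (∀ y ∈ A, ∃ x ∈ ι, ∀ i, |y i - c x i| ≤ R x) ∧
        (∀ z : E d, {x | x ∈ ι ∧ ∀ i, |z i - c x i| ≤ R x}.encard ≤ N) := by
  classical
  have h1θ : 0 < 1 - θ := by linarith
  set δ : ℝ := (1 - θ) / 2 with hδdef
  have hδpos : 0 < δ := by simp only [hδdef]; linarith
  set κ₁ : ℝ := (1 + θ) / δ with hκ₁def
  set κ₂ : ℝ := 3 * (1 + θ) / (1 - θ) with hκ₂def
  set I₁ : Set ℤ := Set.Icc (-(⌈κ₁⌉ + 1)) ⌈κ₁⌉ with hI₁def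
  set I₂ : Set ℤ := Set.Icc (-(⌈κ₂⌉ + 1)) ⌈κ₂⌉ with hI₂def
  have hfin : ((Set.univ.pi fun _ : Fin d => I₁) ×ˢ (Set.univ.pi fun _ : Fin d => I₂)).Finite :=
    Set.Finite.prod (Set.Finite.pi fun _ => Set.finite_Icc _ _)
      (Set.Finite.pi fun _ => Set.finite_Icc _ _)
  obtain ⟨N, hN⟩ : ∃ N : ℕ,
      ((Set.univ.pi fun _ : Fin d => I₁) ×ˢ (Set.univ.pi fun _ : Fin d => I₂)).encard = N :=
    ⟨_, hfin.encard_eq_coe_toFinset_card⟩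
  refine ⟨N, ?_⟩
  intro B hB A c R hR0 hRB hmem
  set ρ : E d → ℝ := fun x => (1 - θ) * R x / 3 with hρdef
  set r : ℕ → ℝ := fun n => B * (1/2 : ℝ) ^ n with hrdef
  have hrpos : ∀ n, 0 < r n := fun n => by simp only [hrdef]; positivity
  have hrhalf : ∀ n, r (n + 1) = r n / 2 := by
    intro n; simp only [hrdef, pow_succ]; ring
  have hrmono : ∀ {m n : ℕ}, m ≤ n → r n ≤ r m := by
    intro m n hmn
    simp only [hrdef]
    exact mul_le_mul_of_nonneg_left
      (pow_le_pow_of_le_one (by norm_num) (by norm_num) hmn) hB.le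
  set Gn : ℕ → Set (E d) := fun n => {x ∈ A | r (n + 1) < R x ∧ R x ≤ r n} with hGndef
  have hGn_exists : ∀ x ∈ A, ∃ n, x ∈ Gn n := by
    intro x hx
    have hex : ∃ n : ℕ, r (n + 1) < R x := by
      obtain ⟨n, hn⟩ := exists_pow_lt_of_lt_one (div_pos (hR0 x hx) hB)
        (by norm_num : (1/2 : ℝ) < 1)
      rw [lt_div_iff₀ hB] at hn
      refine ⟨n, ?_⟩
      have h0 : (0:ℝ) < (1/2 : ℝ) ^ n * B := by positivity
      have he : r (n+1) = ((1/2:ℝ)^n * B) / 2 := by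
        simp only [hrdef, pow_succ]; ring
      rw [he]
      linarith
    refine ⟨Nat.find hex, hx, Nat.find_spec hex, ?_⟩
    rcases Nat.eq_zero_or_pos (Nat.find hex) with h0 | hpos
    · rw [h0]
      have : r 0 = B := by simp [hrdef]
      rw [this]; exact hRB x hx
    · obtain ⟨m, hm⟩ := Nat.exists_eq_succ_of_ne_zero hpos.ne'
      have := Nat.find_min hex (m := m) (by omega)
      rw [hm]
      exact le_of_not_gt this
  have hGn_disj : ∀ {m n : ℕ} {x : E d}, x ∈ Gn m → x ∈ Gn n → m = n := by
    intro m n x hxm hxn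
    by_contra hne
    rcases Nat.lt_or_ge m n with h | h
    · have h1 : R x ≤ r n := hxn.2.2
      have h2 : r (m+1) < R x := hxm.2.1
      have := hrmono (show m + 1 ≤ n by omega)
      linarith
    · have h' : n < m := by omega
      have h1 : R x ≤ r m := hxm.2.2
      have h2 : r (n+1) < R x := hxn.2.1
      have := hrmono (show n + 1 ≤ m by omega)
      linarith
  set K : E d → Set (E d) := fun x => {y | ∀ i, |y i - c x i| ≤ R x} with hKdef
  set Fam : ℕ → Set (E d) → Set (E d) → Prop := fun n C T =>
    T ⊆ Gn n ∧ (∀ x ∈ T, x ∉ C) ∧ T.Pairwise (fun x y => ∃ i, ρ x + ρ y ≤ |x i - y i|)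
    with hFamdef
  have hzorn : ∀ n C, ∃ T, Maximal (Fam n C) T := by
    intro n C
    have hchainub : ∀ ch ⊆ {T | Fam n C T}, IsChain (· ⊆ ·) ch → ch.Nonempty →
        ∃ ub ∈ {T | Fam n C T}, ∀ s ∈ ch, s ⊆ ub := by
      intro ch hchS hchain hchne
      refine ⟨⋃₀ ch, ⟨?_, ?_, ?_⟩, fun s hs => subset_sUnion_of_mem hs⟩
      · rintro x ⟨T, hT, hxT⟩
        exact (hchS hT).1 hxT
      · rintro x ⟨T, hT, hxT⟩
        exact (hchS hT).2.1 x hxT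
      · rintro x ⟨T1, hT1, hxT1⟩ y ⟨T2, hT2, hyT2⟩ hxy
        rcases hchain.total hT1 hT2 with h | h
        · exact (hchS hT2).2.2 (h hxT1) hyT2 hxy
        · exact (hchS hT1).2.2 hxT1 (h hyT2) hxy
    have hempty : ∅ ∈ {T | Fam n C T} :=
      ⟨empty_subset _, fun x hx => absurd hx (notMem_empty x), Set.pairwise_empty _⟩
    obtain ⟨m, -, hmax⟩ := zorn_subset_nonempty {T | Fam n C T} hchainub ∅ hempty
    exact ⟨m, hmax⟩
  choose pick hpick using hzorn
  set covU : ℕ → Set (E d) :=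
    fun n => Nat.rec (motive := fun _ => Set (E d)) ∅
      (fun m Cm => Cm ∪ ⋃ x ∈ pick m Cm, K x) n with hcovUdef
  set sel : ℕ → Set (E d) := fun n => pick n (covU n) with hseldef
  have hcovU_succ : ∀ n, covU (n+1) = covU n ∪ ⋃ x ∈ sel n, K x := fun n => rfl
  have hcovU_mono : ∀ {m n : ℕ}, m ≤ n → covU m ⊆ covU n := by
    intro m n hmn
    induction n with
    | zero =>
      have : m = 0 := by omega
      rw [this]
    | succ k ih =>
      rcases Nat.lt_or_ge m (k+1) with h | h
      · refine (ih (by omega)).trans ?_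
        rw [hcovU_succ k]
        exact subset_union_left
      · have : m = k + 1 := by omega
        rw [this]
  have hsel' : ∀ n, Maximal (Fam n (covU n)) (sel n) := fun n => hpick n _
  have hselGn : ∀ n, sel n ⊆ Gn n := fun n => (hsel' n).1.1
  have hselA : ∀ n, sel n ⊆ A := fun n x hx => (hselGn n hx).1
  set ι := ⋃ n, sel n with hιdef
  have hιA : ι ⊆ A := iUnion_subset hselA
  have hgsel0 : ∀ x ∈ ι, ∃ n, x ∈ sel n := fun x hx => mem_iUnion.mp hx
  set g : E d → ℕ := fun x => if hx : ∃ n, x ∈ sel n then hx.choose else 0 with hgdef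
  have hgsel : ∀ x ∈ ι, x ∈ sel (g x) := by
    intro x hx
    have hx' : ∃ n, x ∈ sel n := mem_iUnion.mp hx
    simp only [hgdef, dif_pos hx']
    exact hx'.choose_spec
  have hg_eq : ∀ {n : ℕ} {x : E d}, x ∈ sel n → g x = n := by
    intro n x hx
    have hxι : x ∈ ι := mem_iUnion.mpr ⟨n, hx⟩
    exact hGn_disj (hselGn _ (hgsel x hxι)) (hselGn n hx)
  have hself : ∀ x ∈ A, x ∈ K x := by
    intro x hx i
    have h1 := hmem x hx i
    have hR := hR0 x hx
    nlinarith
  -- countability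
  have hcount : ∀ n, (sel n).Countable := by
    intro n
    have hρpos : ∀ x ∈ sel n, 0 < ρ x := by
      intro x hx
      have := hR0 x (hselA n hx)
      simp only [hρdef]
      positivity
    have hq : ∀ x ∈ sel n, ∃ qx : Fin d → ℚ, ∀ i, |(qx i : ℝ) - x i| < ρ x := by
      intro x hx
      have hρx := hρpos x hx
      have hex : ∀ i : Fin d, ∃ q : ℚ, x i - ρ x < (q:ℝ) ∧ (q:ℝ) < x i + ρ x := by
        intro i; exact exists_rat_btwn (by linarith)
      choose qx hq1 hq2 using hex
      exact ⟨qx, fun i => abs_sub_lt_iff.mpr ⟨by linarith [hq2 i], by linarith [hq1 i]⟩⟩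
    choose! qf hqf using hq
    rw [← Set.countable_coe_iff]
    have hinj : Function.Injective (fun x : sel n => qf x) := by
      rintro ⟨x, hx⟩ ⟨y, hy⟩ hxy
      simp only [Subtype.mk.injEq]
      by_contra hne
      obtain ⟨i, hi⟩ := (hsel' n).1.2.2 hx hy hne
      have h1 := hqf x hx i
      have h2 := hqf y hy i
      rw [show qf x = qf y from hxy] at h1
      have h3 : |x i - y i| ≤ |(qf y i : ℝ) - x i| + |(qf y i : ℝ) - y i| := by
        have h4 : x i - y i = ((qf y i : ℝ) - y i) - ((qf y i : ℝ) - x i) := by ring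
        rw [h4]
        exact (abs_sub _ _).trans (by rw [add_comm])
      linarith
    exact hinj.countable
  have hιcount : ι.Countable := countable_iUnion hcount
  -- covering
  have hcover : ∀ y ∈ A, ∃ x ∈ ι, y ∈ K x := by
    intro y hy
    obtain ⟨n, hyGn⟩ := hGn_exists y hy
    by_contra hcon
    push_neg at hcon
    have hyUnc : ∀ m, y ∉ covU m := by
      intro m
      induction m with
      | zero => exact notMem_empty y
      | succ k ih =>
        rw [hcovU_succ k]
        rintro (h | h)
        · exact ih h
        · simp only [mem_iUnion] at h
          obtain ⟨x, hxsel, hyK⟩ := h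
          exact hcon x (mem_iUnion.mpr ⟨k, hxsel⟩) hyK
    have hynotsel : y ∉ sel n := by
      intro hysel
      exact hcon y (mem_iUnion.mpr ⟨n, hysel⟩) (hself y hy)
    have hFam' : Fam n (covU n) (insert y (sel n)) := by
      refine ⟨?_, ?_, ?_⟩
      · rintro x (rfl | hx)
        · exact hyGn
        · exact hselGn n hx
      · rintro x (rfl | hx)
        · exact hyUnc n
        · exact (hsel' n).1.2.1 x hx
      · have hsym : Symmetric (fun x y : E d => ∃ i, ρ x + ρ y ≤ |x i - y i|) := by
          rintro x z ⟨i, hi⟩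
          exact ⟨i, by rw [abs_sub_comm, add_comm]; exact hi⟩
        haveI : Std.Symm (fun x y : E d => ∃ i, ρ x + ρ y ≤ |x i - y i|) := ⟨fun _ _ h => hsym h⟩
        rw [Set.pairwise_insert_of_symm]
        refine ⟨(hsel' n).1.2.2, ?_⟩
        intro x hxsel hxy
        have hynK : y ∉ K x := hcon x (mem_iUnion.mpr ⟨n, hxsel⟩)
        have : ¬ ∀ i, |y i - c x i| ≤ R x := hynK
        push_neg at this
        obtain ⟨i, hi⟩ := this
        refine ⟨i, ?_⟩
        have hxc := hmem x (hselA n hxsel) i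
        have htri : |y i - x i| ≥ |y i - c x i| - |x i - c x i| := by
          have := abs_sub_abs_le_abs_sub (y i - c x i) (x i - c x i)
          have h5 : (y i - c x i) - (x i - c x i) = y i - x i := by ring
          rw [h5] at this
          linarith [le_abs_self (|y i - c x i| - |x i - c x i|)]
        -- sizes: same generation
        have hRx1 : r (n+1) < R x := (hselGn n hxsel).2.1
        have hRy2 : R y ≤ r n := hyGn.2.2
        have hrh := hrhalf n
        have hkey : (1-θ) * R x ≤ |y i - x i| := by nlinarith [hi, hxc, htri]
        have h6 : ρ y + ρ x = (1-θ) * R y / 3 + (1-θ) * R x / 3 := rfl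
        rw [h6]
        nlinarith [mul_le_mul_of_nonneg_left (show R y + R x ≤ 3 * R x by linarith) h1θ.le]
    have hins := (hsel' n).2 hFam' (subset_insert y (sel n))
    exact hynotsel (hins (mem_insert y (sel n)))
  -- ===== overlap bound =====
  refine ⟨ι, hιA, hιcount, fun y hy => hcover y hy, ?_⟩
  intro z
  set J : Set (E d) := {x | x ∈ ι ∧ ∀ i, |z i - c x i| ≤ R x} with hJdef
  have hJfacts : ∀ x ∈ J, x ∈ sel (g x) ∧ 0 < R x ∧ (∀ i, |x i - z i| ≤ (1+θ) * R x) := by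
    rintro x ⟨hxι, hzK⟩
    refine ⟨hgsel x hxι, hR0 x (hιA hxι), fun i => ?_⟩
    have h1 := hmem x (hιA hxι) i
    have h2 := hzK i
    have h3 : |x i - z i| ≤ |x i - c x i| + |z i - c x i| := by
      have h4 : x i - z i = (x i - c x i) - (z i - c x i) := by ring
      rw [h4]
      exact abs_sub _ _
    nlinarith
  set F : E d → ((Fin d → ℤ) × (Fin d → ℤ)) := fun x =>
    (fun i => ⌊(x i - z i) / (R x * δ)⌋,
     fun i => ⌊(x i - z i) / ((2 * (1-θ) / 3) * r (g x + 1))⌋) with hFdef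
  -- cross-generation separation
  have hcross : ∀ x ∈ J, ∀ y ∈ J, g x < g y → (F x).1 ≠ (F y).1 := by
    intro x hxJ y hyJ hgxy
    obtain ⟨hxsel, hRx, hxz⟩ := hJfacts x hxJ
    obtain ⟨hysel, hRy, hyz⟩ := hJfacts y hyJ
    have hyUnc : y ∉ covU (g y) := (hsel' (g y)).1.2.1 y hysel
    have hKsub : K x ⊆ covU (g x + 1) := by
      rw [hcovU_succ (g x)]
      refine subset_union_right.trans' ?_
      intro w hw
      exact mem_biUnion hxsel hw
    have hyK : y ∉ K x := fun h => hyUnc (hcovU_mono (show g x + 1 ≤ g y by omega) (hKsub h))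
    have hyK' : ¬ ∀ i, |y i - c x i| ≤ R x := hyK
    push_neg at hyK'
    obtain ⟨t, ht⟩ := hyK'
    have hRyx : R y ≤ R x := by
      have h1 : R y ≤ r (g y) := (hselGn _ hysel).2.2
      have h2 : r (g x + 1) < R x := (hselGn _ hxsel).2.1
      have h3 : r (g y) ≤ r (g x + 1) := hrmono (by omega)
      linarith
    intro hFeq
    simp only [hFdef] at hFeq
    have hflr : ⌊(x t - z t) / (R x * δ)⌋ = ⌊(y t - z t) / (R y * δ)⌋ := congrFun hFeq t
    have habs := abs_sub_lt_one_of_floor_eq hflr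
    rw [abs_sub_lt_iff] at habs
    obtain ⟨hab1, hab2⟩ := habs
    have hzx : |z t - c x t| ≤ R x := hxJ.2 t
    have hxc : |x t - c x t| ≤ θ * R x := hmem x (hιA hxJ.1) t
    have hE1a : -(R x) ≤ z t - c x t := by linarith [(abs_le.mp hzx).1]
    have hE1b : z t - c x t ≤ R x := (abs_le.mp hzx).2
    have hRxδ : 0 < R x * δ := by positivity
    have hRyδ : 0 < R y * δ := by positivity
    have hRyδx : R y * δ ≤ R x * δ := by nlinarith
    have hRxne : R x ≠ 0 := ne_of_gt hRx
    have h1θne : (1:ℝ) - θ ≠ 0 := ne_of_gt h1θ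
    have hgap : (R x - (z t - c x t)) / (R x * δ) - (θ * R x - (z t - c x t)) / (R x * δ) = 2 := by
      rw [div_sub_div_same, show R x - (z t - c x t) - (θ * R x - (z t - c x t)) = (1-θ) * R x by ring,
        hδdef]
      field_simp
    rcases lt_abs.mp ht with hpos | hneg
    · -- y t - c x t > R x
      have hytz : R x - (z t - c x t) < y t - z t := by linarith
      have hytz0 : 0 ≤ R x - (z t - c x t) := by linarith
      have hxtz : x t - z t ≤ θ * R x - (z t - c x t) := by linarith [(abs_le.mp hxc).2]
      have hv : (R x - (z t - c x t)) / (R x * δ) < (y t - z t) / (R y * δ) := by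
        rw [div_lt_div_iff₀ hRxδ hRyδ]
        nlinarith [mul_le_mul_of_nonneg_left hRyδx hytz0, mul_lt_mul_of_pos_right hytz hRxδ]
      have hu : (x t - z t) / (R x * δ) ≤ (θ * R x - (z t - c x t)) / (R x * δ) :=
        (div_le_div_iff_of_pos_right hRxδ).mpr hxtz
      linarith
    · -- y t - c x t < -(R x)
      have hytz : y t - z t < -(R x + (z t - c x t)) := by linarith
      have hytz0 : 0 ≤ R x + (z t - c x t) := by linarith
      have hxtz : -(θ * R x) - (z t - c x t) ≤ x t - z t := by linarith [(abs_le.mp hxc).1]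
      have hv : (y t - z t) / (R y * δ) < (-(R x + (z t - c x t))) / (R x * δ) := by
        rw [div_lt_div_iff₀ hRyδ hRxδ]
        nlinarith [mul_le_mul_of_nonneg_left hRyδx hytz0, mul_lt_mul_of_pos_right hytz hRxδ]
      have hu : (-(θ * R x) - (z t - c x t)) / (R x * δ) ≤ (x t - z t) / (R x * δ) :=
        (div_le_div_iff_of_pos_right hRxδ).mpr hxtz
      have hgap2 : (-(θ * R x) - (z t - c x t)) / (R x * δ) - (-(R x + (z t - c x t))) / (R x * δ)
          = 2 := by
        rw [div_sub_div_same,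
          show -(θ * R x) - (z t - c x t) - (-(R x + (z t - c x t))) = (1-θ) * R x by ring, hδdef]
        field_simp
      linarith
  -- injectivity
  have hinjJ : Set.InjOn F J := by
    intro x hxJ y hyJ hFeq
    rcases lt_trichotomy (g x) (g y) with hlt | heq | hgt
    · exact absurd (congrArg Prod.fst hFeq) (hcross x hxJ y hyJ hlt)
    · by_contra hne
      obtain ⟨hxsel, hRx, hxz⟩ := hJfacts x hxJ
      obtain ⟨hysel, hRy, hyz⟩ := hJfacts y hyJ
      rw [heq] at hxsel
      obtain ⟨i, hi⟩ := (hsel' (g y)).1.2.2 hxsel hysel hne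
      have hs : (0:ℝ) < (2 * (1-θ) / 3) * r (g y + 1) := by
        have := hrpos (g y + 1)
        positivity
      have hflr : ⌊(x i - z i) / ((2 * (1-θ) / 3) * r (g x + 1))⌋
          = ⌊(y i - z i) / ((2 * (1-θ) / 3) * r (g y + 1))⌋ := by
        have := congrArg Prod.snd hFeq
        simp only [hFdef] at this
        exact congrFun this i
      rw [heq] at hflr
      have habs := abs_sub_lt_one_of_floor_eq hflr
      rw [div_sub_div_same, show x i - z i - (y i - z i) = x i - y i from by ring,
        abs_div, abs_of_pos hs, div_lt_one hs] at habs
      -- separation: ρ x + ρ y > s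
      have hRx1 : r (g y + 1) < R x := (hselGn _ hxsel).2.1
      have hRy1 : r (g y + 1) < R y := (hselGn _ hysel).2.1
      have hsep : (2 * (1-θ) / 3) * r (g y + 1) < ρ x + ρ y := by
        have h7 : ρ x + ρ y = (1-θ) * R x / 3 + (1-θ) * R y / 3 := rfl
        rw [h7]
        nlinarith [mul_lt_mul_of_pos_left (show r (g y + 1) + r (g y + 1) < R x + R y by linarith) h1θ]
      have := hi
      linarith
    · exact absurd (congrArg Prod.fst hFeq).symm (hcross y hyJ x hxJ hgt)
  -- maps to the grid
  have hmap : Set.MapsTo F J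
      ((Set.univ.pi fun _ : Fin d => I₁) ×ˢ (Set.univ.pi fun _ : Fin d => I₂)) := by
    intro x hxJ
    obtain ⟨hxsel, hRx, hxz⟩ := hJfacts x hxJ
    have hRxδ : 0 < R x * δ := by positivity
    constructor
    · intro i _
      simp only [hFdef, hI₁def]
      apply floor_mem_Icc_of_abs_le
      rw [abs_div, abs_of_pos hRxδ, div_le_iff₀ hRxδ]
      have hδne : δ ≠ 0 := ne_of_gt hδpos
      have : κ₁ * (R x * δ) = (1 + θ) * R x := by
        rw [hκ₁def]
        field_simp
      rw [this]
      exact hxz i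
    · intro i _
      simp only [hFdef, hI₂def]
      apply floor_mem_Icc_of_abs_le
      have hr' : 0 < r (g x + 1) := hrpos _
      have hs : (0:ℝ) < (2 * (1-θ) / 3) * r (g x + 1) := by positivity
      rw [abs_div, abs_of_pos hs, div_le_iff₀ hs]
      have h1θne : (1:ℝ) - θ ≠ 0 := ne_of_gt h1θ
      have hkk : κ₂ * ((2 * (1-θ) / 3) * r (g x + 1)) = 2 * (1 + θ) * r (g x + 1) := by
        rw [hκ₂def]
        field_simp
      rw [hkk]
      have h1 : R x ≤ r (g x) := (hselGn _ hxsel).2.2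
      have h2 : r (g x) = 2 * r (g x + 1) := by rw [hrhalf]; ring
      calc |x i - z i| ≤ (1 + θ) * R x := hxz i
        _ ≤ 2 * (1 + θ) * r (g x + 1) := by nlinarith
  calc J.encard ≤ _ := encard_le_of_injOn_mapsTo hinjJ hmap
    _ = (N : ℕ∞) := hN

section B
variable {d : ℕ}

lemma mfun_pos (c : E d) : 0 < mfun c := by
  unfold mfun
  split_ifs with h
  · norm_num
  · have : 0 < ‖c‖ := by linarith [norm_nonneg c, not_le.mp h]
    positivity

lemma mfun_le_one (c : E d) : mfun c ≤ 1 := by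
  unfold mfun
  split_ifs with h
  · exact le_refl 1
  · have h1 : 1 < ‖c‖ := not_le.mp h
    rw [div_le_one (by linarith)]
    linarith

lemma mfun_mul_norm_le_one (c : E d) : mfun c * ‖c‖ ≤ 1 := by
  unfold mfun
  split_ifs with h
  · simpa using h
  · have h1 : 1 < ‖c‖ := not_le.mp h
    rw [div_mul_eq_mul_div, one_mul, div_le_one (by linarith)]

lemma measurable_coord (i : Fin d) : Measurable fun x : E d => x i := by
  have : (fun x : E d => x i) = fun x => (EuclideanSpace.proj (𝕜 := ℝ) i) x := rfl
  rw [this]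
  exact (EuclideanSpace.proj (𝕜 := ℝ) i).continuous.measurable

lemma measurableSet_cube (c : E d) (l : ℝ) : MeasurableSet (cube d c l) := by
  have : cube d c l = ⋂ i, (fun x : E d => x i) ⁻¹' (Set.Icc (c i - l/2) (c i + l/2)) := by
    ext x
    simp only [cube, mem_setOf_eq, mem_iInter, mem_preimage, mem_Icc, abs_le]
    constructor
    · intro h i
      obtain ⟨h1, h2⟩ := h i
      constructor <;> linarith
    · intro h i
      obtain ⟨h1, h2⟩ := h i
      constructor <;> linarith
  rw [this]
  exact MeasurableSet.iInter fun i => (measurable_coord i) measurableSet_Icc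

lemma volume_cube (c : E d) {l : ℝ} (hl : 0 ≤ l) :
    volume (cube d c l) = (ENNReal.ofReal l) ^ d := by
  have hpre : cube d c l = (MeasurableEquiv.toLp 2 (Fin d → ℝ)).symm ⁻¹'
      (Set.univ.pi fun i => Set.Icc (c i - l/2) (c i + l/2)) := by
    ext x
    simp only [cube, mem_setOf_eq, mem_preimage, Set.mem_pi, mem_univ, forall_true_left,
      mem_Icc, abs_le]
    constructor
    · intro h i
      obtain ⟨h1, h2⟩ := h i
      exact ⟨(by linarith : c i - l/2 ≤ x i), (by linarith : x i ≤ c i + l/2)⟩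
    · intro h i
      have := h i
      change c i - l/2 ≤ x i ∧ x i ≤ c i + l/2 at this
      obtain ⟨h1, h2⟩ := this
      constructor <;> linarith
  rw [hpre, (EuclideanSpace.volume_preserving_symm_measurableEquiv_toLp (Fin d)).measure_preimage
    (by exact (MeasurableSet.univ_pi fun i => measurableSet_Icc).nullMeasurableSet)]
  rw [volume_pi_pi]
  have : ∀ i : Fin d, volume (Set.Icc (c i - l/2) (c i + l/2)) = ENNReal.ofReal l := by
    intro i
    rw [Real.volume_Icc]
    congr 1
    ring
  simp only [this]
  rw [Finset.prod_const, Finset.card_univ, Fintype.card_fin]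

lemma norm_sq_diff_le {β : ℝ} (hβ : 0 < β) {c : E d} {l : ℝ} (hl : 0 < l)
    (hlm : l ≤ β * mfun c) {x : E d} (hx : x ∈ cube d c l) :
    |‖x‖^2 - ‖c‖^2| ≤ β * Real.sqrt d + d * β^2 / 4 := by
  set D := dist x c with hD
  have hD0 : 0 ≤ D := dist_nonneg
  have hDsq : D^2 ≤ d * (l/2)^2 := by
    have h1 : D = Real.sqrt (∑ i, (x i - c i)^2) := by
      rw [hD, EuclideanSpace.dist_eq]
      congr 1
      apply Finset.sum_congr rfl
      intro i _
      rw [Real.dist_eq]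
      rw [sq_abs]
    have h2 : (∑ i, (x i - c i)^2) ≤ ∑ _i : Fin d, (l/2)^2 := by
      apply Finset.sum_le_sum
      intro i _
      have := hx i
      have habs : |x i - c i|^2 ≤ (l/2)^2 := by
        apply pow_le_pow_left₀ (abs_nonneg _) this
      rwa [sq_abs] at habs
    have h3 : (∑ _i : Fin d, (l/2:ℝ)^2) = d * (l/2)^2 := by
      rw [Finset.sum_const, Finset.card_univ, Fintype.card_fin, nsmul_eq_mul]
    rw [h1, Real.sq_sqrt (Finset.sum_nonneg fun i _ => sq_nonneg _)]
    rw [h3] at h2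
    exact h2
  have hm1 : mfun c ≤ 1 := mfun_le_one c
  have hm2 : mfun c * ‖c‖ ≤ 1 := mfun_mul_norm_le_one c
  have hm0 : 0 < mfun c := mfun_pos c
  have hlβ : l ≤ β := le_trans hlm (by nlinarith)
  have hDsq' : D^2 ≤ d * β^2 / 4 := by
    have : d * (l/2)^2 ≤ d * β^2/4 := by
      have : (l/2)^2 ≤ β^2/4 := by nlinarith
      have hd0 : (0:ℝ) ≤ d := Nat.cast_nonneg d
      nlinarith
    linarith
  have hDc : 2 * D * ‖c‖ ≤ β * Real.sqrt d := by
    have hsq : (2 * D * ‖c‖)^2 ≤ d * β^2 := by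
      have h4 : (D * ‖c‖)^2 ≤ d * (l/2)^2 * ‖c‖^2 := by
        have := sq_nonneg ‖c‖
        nlinarith [norm_nonneg c]
      have h5 : (l/2)^2 * ‖c‖^2 ≤ (β/2)^2 := by
        have h6 : l * ‖c‖ ≤ β := by
          calc l * ‖c‖ ≤ (β * mfun c) * ‖c‖ := by nlinarith [norm_nonneg c]
            _ = β * (mfun c * ‖c‖) := by ring
            _ ≤ β * 1 := by nlinarith
            _ = β := by ring
        have h7 : 0 ≤ l * ‖c‖ := by positivity
        nlinarith
      have hd0 : (0:ℝ) ≤ d := Nat.cast_nonneg d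
      nlinarith
    have h8 : 0 ≤ 2 * D * ‖c‖ := by positivity
    have h9 : 0 ≤ β * Real.sqrt d := by positivity
    nlinarith [Real.sq_sqrt (Nat.cast_nonneg d : (0:ℝ) ≤ d), Real.sqrt_nonneg (d:ℝ),
      sq_nonneg (2 * D * ‖c‖ - β * Real.sqrt d)]
  have htri : |‖x‖ - ‖c‖| ≤ D := by
    rw [hD, dist_eq_norm]
    exact abs_norm_sub_norm_le x c
  have hxn : 0 ≤ ‖x‖ := norm_nonneg x
  have hcn : 0 ≤ ‖c‖ := norm_nonneg c
  have habs2 : |‖x‖^2 - ‖c‖^2| ≤ D * (‖x‖ + ‖c‖) := by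
    have : ‖x‖^2 - ‖c‖^2 = (‖x‖ - ‖c‖) * (‖x‖ + ‖c‖) := by ring
    rw [this, abs_mul, abs_of_nonneg (by positivity : (0:ℝ) ≤ ‖x‖ + ‖c‖)]
    exact mul_le_mul_of_nonneg_right htri (by positivity)
  have hxle : ‖x‖ ≤ ‖c‖ + D := by
    have := (abs_le.mp htri).2
    linarith
  calc |‖x‖^2 - ‖c‖^2| ≤ D * (‖x‖ + ‖c‖) := habs2
    _ ≤ D * (2*‖c‖ + D) := by nlinarith
    _ = 2 * D * ‖c‖ + D^2 := by ring
    _ ≤ β * Real.sqrt d + d * β^2/4 := by linarith [hDsq']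

end B

section B2
variable {d : ℕ}

def A0 (d : ℕ) (β : ℝ) : ℝ := β * Real.sqrt d + d * β^2 / 4

lemma gaussian_density_continuous :
    Continuous fun x : E d => Real.pi ^ (-(d:ℝ)/2) * Real.exp (-‖x‖^2) := by
  apply continuous_const.mul
  exact Real.continuous_exp.comp ((continuous_norm.pow 2).neg)

lemma gauss_cube_le {β : ℝ} (hβ : 0 < β) {c : E d} {l : ℝ} (hl : 0 < l) (hlm : l ≤ β * mfun c) :
    gaussianM d (cube d c l) ≤
      ENNReal.ofReal (Real.pi ^ (-(d:ℝ)/2) * Real.exp (-‖c‖^2 + A0 d β)) *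
        (ENNReal.ofReal l) ^ d := by
  rw [gaussianM, withDensity_apply _ (measurableSet_cube c l)]
  calc ∫⁻ x in cube d c l, ENNReal.ofReal (Real.pi ^ (-(d:ℝ)/2) * Real.exp (-‖x‖^2)) ∂volume
      ≤ ∫⁻ _x in cube d c l,
          ENNReal.ofReal (Real.pi ^ (-(d:ℝ)/2) * Real.exp (-‖c‖^2 + A0 d β)) ∂volume := by
        apply setLIntegral_mono measurable_const
        intro x hx
        apply ENNReal.ofReal_le_ofReal
        have hdd := norm_sq_diff_le hβ hl hlm hx
        have hle : -‖x‖^2 ≤ -‖c‖^2 + A0 d β := by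
          have := (abs_le.mp hdd).1
          unfold A0
          linarith
        have hpi : 0 ≤ Real.pi ^ (-(d:ℝ)/2) := le_of_lt (Real.rpow_pos_of_pos Real.pi_pos _)
        exact mul_le_mul_of_nonneg_left (Real.exp_le_exp.mpr hle) hpi
    _ = _ := by rw [setLIntegral_const, volume_cube c hl.le, mul_comm]
  
lemma gauss_cube_ge {β : ℝ} (hβ : 0 < β) {c : E d} {l : ℝ} (hl : 0 < l) (hlm : l ≤ β * mfun c) :
    ENNReal.ofReal (Real.pi ^ (-(d:ℝ)/2) * Real.exp (-‖c‖^2 - A0 d β)) * (ENNReal.ofReal l) ^ d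
      ≤ gaussianM d (cube d c l) := by
  rw [gaussianM, withDensity_apply _ (measurableSet_cube c l)]
  have hmeas : Measurable fun x : E d =>
      ENNReal.ofReal (Real.pi ^ (-(d:ℝ)/2) * Real.exp (-‖x‖^2)) :=
    (ENNReal.continuous_ofReal.comp gaussian_density_continuous).measurable
  calc ENNReal.ofReal (Real.pi ^ (-(d:ℝ)/2) * Real.exp (-‖c‖^2 - A0 d β)) * (ENNReal.ofReal l)^d
      = ∫⁻ _x in cube d c l,
          ENNReal.ofReal (Real.pi ^ (-(d:ℝ)/2) * Real.exp (-‖c‖^2 - A0 d β)) ∂volume := by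
        rw [setLIntegral_const, volume_cube c hl.le, mul_comm]
    _ ≤ ∫⁻ x in cube d c l, ENNReal.ofReal (Real.pi ^ (-(d:ℝ)/2) * Real.exp (-‖x‖^2)) ∂volume := by
        apply setLIntegral_mono hmeas
        intro x hx
        apply ENNReal.ofReal_le_ofReal
        have hdd := norm_sq_diff_le hβ hl hlm hx
        have hle : -‖c‖^2 - A0 d β ≤ -‖x‖^2 := by
          have := (abs_le.mp hdd).2
          unfold A0
          linarith
        have hpi : 0 ≤ Real.pi ^ (-(d:ℝ)/2) := le_of_lt (Real.rpow_pos_of_pos Real.pi_pos _)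
        exact mul_le_mul_of_nonneg_left (Real.exp_le_exp.mpr hle) hpi

lemma gauss_cube_pos {β : ℝ} (hβ : 0 < β) {c : E d} {l : ℝ} (hl : 0 < l)
    (hlm : l ≤ β * mfun c) : 0 < gaussianM d (cube d c l) := by
  refine lt_of_lt_of_le ?_ (gauss_cube_ge hβ hl hlm)
  apply ENNReal.mul_pos
  · simp only [ne_eq, ENNReal.ofReal_eq_zero, not_le]
    positivity
  · apply pow_ne_zero
    simp only [ne_eq, ENNReal.ofReal_eq_zero, not_le]
    exact hl

lemma gauss_cube_ne_top {β : ℝ} (hβ : 0 < β) {c : E d} {l : ℝ} (hl : 0 < l)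
    (hlm : l ≤ β * mfun c) : gaussianM d (cube d c l) ≠ ∞ := by
  refine ne_top_of_le_ne_top ?_ (gauss_cube_le hβ hl hlm)
  exact ENNReal.mul_ne_top ENNReal.ofReal_ne_top (by simp [ENNReal.pow_ne_top])

lemma gauss_doubling {β k : ℝ} (hβ : 0 < β) (hk : 1 ≤ k) {c : E d} {l : ℝ} (hl : 0 < l)
    (hlm : k * l ≤ β * mfun c) :
    gaussianM d (cube d c (k * l)) ≤
      ENNReal.ofReal (Real.exp (2 * A0 d β) * k ^ d) * gaussianM d (cube d c l) := by
  have hk0 : 0 < k := by linarith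
  have hkl0 : 0 < k * l := by positivity
  have hm0 := mfun_pos c
  have hlm' : l ≤ β * mfun c := by nlinarith
  have h1 := gauss_cube_le hβ hkl0 hlm
  have h2 := gauss_cube_ge hβ hl hlm'
  have hexp : Real.exp (2 * A0 d β) * Real.exp (-‖c‖^2 - A0 d β)
      = Real.exp (-‖c‖^2 + A0 d β) := by
    rw [← Real.exp_add]; congr 1; ring
  have hsplit : ENNReal.ofReal (Real.pi ^ (-(d:ℝ)/2) * Real.exp (-‖c‖^2 + A0 d β)) *
      (ENNReal.ofReal (k * l)) ^ d
      = ENNReal.ofReal (Real.exp (2 * A0 d β) * k ^ d) *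
        (ENNReal.ofReal (Real.pi ^ (-(d:ℝ)/2) * Real.exp (-‖c‖^2 - A0 d β)) *
          (ENNReal.ofReal l) ^ d) := by
    rw [← ENNReal.ofReal_pow (by positivity : (0:ℝ) ≤ k * l),
      ← ENNReal.ofReal_pow hl.le,
      ← ENNReal.ofReal_mul (by positivity), ← ENNReal.ofReal_mul (by positivity),
      ← ENNReal.ofReal_mul (by positivity)]
    congr 1
    rw [mul_pow, ← hexp]
    ring
  calc gaussianM d (cube d c (k*l)) ≤ _ := h1
    _ = _ := hsplit
    _ ≤ _ := mul_le_mul_right h2 _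

end B2

section C
variable {d : ℕ}

lemma holder_cube {p : ℝ} (hp : 1 < p) {P : Set (E d)} (hP : MeasurableSet P)
    {f v : E d → ℝ≥0∞} (hf : Measurable f) (hv : Measurable v)
    (hf0 : ∀ x, v x = ∞ → f x = 0)
    (h0 : (gaussianM d) (P ∩ {x | v x = 0}) = 0) :
    ∫⁻ x in P, f x ∂(gaussianM d) ≤
      (∫⁻ x in P, f x ^ p * v x ∂(gaussianM d)) ^ (1/p) *
      (∫⁻ x in P, v x ^ (1 - pconj p) ∂(gaussianM d)) ^ (1/(pconj p)) := by
  have hp0 : p ≠ 0 := by linarith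
  have hp0' : (0:ℝ) ≤ p := by linarith
  have hp1 : p - 1 ≠ 0 := by linarith
  have hconj : p.HolderConjugate (pconj p) := by
    exact (Real.holderConjugate_iff_eq_conjExponent hp).mpr rfl
  set F := fun x => f x * v x ^ (1/p) with hFdef
  set G := fun x => (v x ^ (1/p))⁻¹ with hGdef
  have hFm : Measurable F := hf.mul (hv.pow_const _)
  have hGm : Measurable G := (hv.pow_const _).inv
  have hmono : ∀ᵐ x ∂(gaussianM d).restrict P, f x ≤ F x * G x := by
    have hbad : ∀ᵐ x ∂(gaussianM d), x ∉ P ∩ {x | v x = 0} := by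
      rw [← measure_eq_zero_iff_ae_notMem]
      exact h0
    have hbad' : ∀ᵐ x ∂(gaussianM d).restrict P, x ∉ P ∩ {x | v x = 0} :=
      ae_restrict_of_ae hbad
    have hmem : ∀ᵐ x ∂(gaussianM d).restrict P, x ∈ P := ae_restrict_mem hP
    filter_upwards [hbad', hmem] with x hx1 hx2
    have hvx : v x ≠ 0 := fun h => hx1 ⟨hx2, h⟩
    rcases eq_or_ne (v x) ∞ with htop | hfin
    · rw [hf0 x htop]
      exact zero_le
    · have hr0 : v x ^ (1/p) ≠ 0 := by
        simp only [ne_eq, ENNReal.rpow_eq_zero_iff, not_or, not_and]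
        exact ⟨fun h => absurd h hvx, fun h => absurd h hfin⟩
      have hrt : v x ^ (1/p) ≠ ∞ := by
        simp only [ne_eq, ENNReal.rpow_eq_top_iff, not_or, not_and]
        exact ⟨fun h => absurd h hvx, fun h => absurd h hfin⟩
      have : F x * G x = f x * (v x ^ (1/p) * (v x ^ (1/p))⁻¹) := by
        simp only [hFdef, hGdef]; ring
      rw [this, ENNReal.mul_inv_cancel hr0 hrt, mul_one]
  calc ∫⁻ x in P, f x ∂(gaussianM d) ≤ ∫⁻ x in P, F x * G x ∂(gaussianM d) :=
        lintegral_mono_ae hmono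
    _ ≤ (∫⁻ x in P, F x ^ p ∂(gaussianM d)) ^ (1/p) *
        (∫⁻ x in P, G x ^ (pconj p) ∂(gaussianM d)) ^ (1/(pconj p)) := by
        exact ENNReal.lintegral_mul_le_Lp_mul_Lq _ hconj hFm.aemeasurable hGm.aemeasurable
    _ = (∫⁻ x in P, f x ^ p * v x ∂(gaussianM d)) ^ (1/p) *
        (∫⁻ x in P, v x ^ (1 - pconj p) ∂(gaussianM d)) ^ (1/(pconj p)) := by
        have hFp : ∀ x, F x ^ p = f x ^ p * v x := by
          intro x
          simp only [hFdef]
          rw [ENNReal.mul_rpow_of_nonneg _ _ hp0', ← ENNReal.rpow_mul,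
            one_div, inv_mul_cancel₀ hp0, ENNReal.rpow_one]
        have hGp : ∀ x, G x ^ (pconj p) = v x ^ (1 - pconj p) := by
          intro x
          simp only [hGdef]
          rw [ENNReal.inv_rpow, ← ENNReal.rpow_mul, ← ENNReal.rpow_neg]
          congr 1
          rw [pconj]
          field_simp
          ring
        simp only [hFp, hGp]
end C

section C2

lemma le_Aconst {d : ℕ} {b' p q α : ℝ} {u v : E d → ℝ≥0∞} {c : E d} {l : ℝ}
    (h : adm d b' c l) :
    gaussianM d (cube d c l) ^ (α/d + 1/q - 1/p) *
    ((gaussianM d (cube d c l))⁻¹ * ∫⁻ x in cube d c l, u x ∂(gaussianM d)) ^ (1/q) *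
    ((gaussianM d (cube d c l))⁻¹ *
        ∫⁻ x in cube d c l, v x ^ (1 - pconj p) ∂(gaussianM d)) ^ (1/(pconj p))
      ≤ Aconst d b' p q α u v := by
  refine le_iSup₂_of_le c l ?_
  exact le_iSup_of_le h le_rfl

lemma cube_mono {d : ℕ} (c : E d) {l l' : ℝ} (h : l ≤ l') : cube d c l ⊆ cube d c l' := by
  intro x hx i
  exact le_trans (hx i) (by linarith)

lemma percube {d : ℕ} {a b' p q α : ℝ} (ha : 0 < a) (hab : a < b')
    (hp : 1 ≤ p) (hpq : p ≤ q) (hα : 0 ≤ α) (hαd : α < d)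
    {u v : E d → ℝ≥0∞} (hu : Measurable u) (hv : Measurable v)
    (hA : APair d b' p q α u v) :
    ∃ C₁ : ℝ≥0∞, C₁ ≠ ∞ ∧ ∀ (f : E d → ℝ≥0∞), Measurable f →
      (∀ x, v x = ∞ → f x = 0) → ∀ (lam : ℝ≥0∞) (c : E d) (l : ℝ), adm d a c l →
      lam * gaussianM d (cube d c l) ^ (1 - α/d) ≤ ∫⁻ y in cube d c l, f y ∂(gaussianM d) →
      lam * (∫⁻ x in cube d c (b'/a * l), u x ∂(gaussianM d)) ^ (1/q)
        ≤ C₁ * (∫⁻ x in cube d c (b'/a * l), f x ^ p * v x ∂(gaussianM d)) ^ (1/p) := by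
  have hd0 : (0:ℝ) < d := lt_of_le_of_lt hα hαd
  have hb' : (0:ℝ) < b' := lt_trans ha hab
  have hq1 : 1 ≤ q := hp.trans hpq
  have hq0 : q ≠ 0 := by linarith
  have hqinv : 0 < 1/q := by positivity
  have hs : 0 < 1 - α/d := by
    have : α/d < 1 := (div_lt_one hd0).mpr hαd
    linarith
  set s : ℝ := 1 - α/d with hsdef
  set k : ℝ := b'/a with hkdef
  have hk1 : 1 < k := (one_lt_div ha).mpr hab
  set D : ℝ≥0∞ := ENNReal.ofReal (Real.exp (2 * A0 d b') * k ^ d) with hDdef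
  have hDtop : D ≠ ∞ := ENNReal.ofReal_ne_top
  -- facts for an admissible witness cube
  have hfacts : ∀ (c : E d) (l : ℝ), adm d a c l →
      adm d b' c (k * l) ∧ cube d c l ⊆ cube d c (k * l) ∧
      0 < gaussianM d (cube d c l) ∧ gaussianM d (cube d c l) ≠ ∞ ∧
      0 < gaussianM d (cube d c (k*l)) ∧ gaussianM d (cube d c (k*l)) ≠ ∞ ∧
      gaussianM d (cube d c (k*l)) ≤ D * gaussianM d (cube d c l) := by
    intro c l hQ
    obtain ⟨hl, hlm⟩ := hQ
    have hm := mfun_pos c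
    have hkl : k * l ≤ b' * mfun c := by
      rw [hkdef]
      rw [div_mul_eq_mul_div, div_le_iff₀ ha]
      nlinarith
    have hkl0 : 0 < k * l := by positivity
    have hlb' : l ≤ b' * mfun c := by nlinarith
    refine ⟨⟨hkl0, hkl⟩, cube_mono c (by nlinarith), gauss_cube_pos hb' hl hlb',
      gauss_cube_ne_top hb' hl hlb', gauss_cube_pos hb' hkl0 hkl,
      gauss_cube_ne_top hb' hkl0 hkl, gauss_doubling hb' hk1.le hl hkl⟩
  by_cases hp1 : p = 1
  · -- ============ p = 1 ============
    rw [APair, if_pos hp1] at hA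
    obtain ⟨CA, hCAtop, hCAae⟩ := hA
    subst hp1
    refine ⟨CA * D ^ s + 1, ENNReal.add_ne_top.mpr ⟨ENNReal.mul_ne_top hCAtop (ENNReal.rpow_lt_top_of_nonneg hs.le hDtop).ne, ENNReal.one_ne_top⟩, ?_⟩
    intro f hf hf0 lam c l hQ hlam
    obtain ⟨hPadm, hsub, hGQ0, hGQt, hGP0, hGPt, hdb⟩ := hfacts c l hQ
    set GQ := gaussianM d (cube d c l) with hGQdef
    set GP := gaussianM d (cube d c (k*l)) with hGPdef
    set Gu := ∫⁻ x in cube d c (k*l), u x ∂(gaussianM d) with hGudef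
    set I := ∫⁻ x in cube d c (k*l), f x ^ (1:ℝ) * v x ∂(gaussianM d) with hIdef
    have hae := hCAae c (k*l) hPadm
    -- step 1 : Kp * ∫_P f ≤ CA * I
    set Kp : ℝ≥0∞ := GP ^ (α/d + 1/q - 1) * (GP⁻¹ * Gu) ^ (1/q) with hKpdef
    have hstep1 : Kp * (∫⁻ y in cube d c (k*l), f y ∂(gaussianM d)) ≤ CA * I := by
      rw [← lintegral_const_mul Kp hf]
      have hmono : ∫⁻ y in cube d c (k*l), Kp * f y ∂(gaussianM d)
          ≤ ∫⁻ y in cube d c (k*l), CA * (f y ^ (1:ℝ) * v y) ∂(gaussianM d) := by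
        apply lintegral_mono_ae
        filter_upwards [hae] with x hx
        calc Kp * f x ≤ (CA * v x) * f x := mul_le_mul_left hx _
          _ = CA * (f x ^ (1:ℝ) * v x) := by rw [ENNReal.rpow_one]; ring
      refine hmono.trans ?_
      rw [lintegral_const_mul CA (by exact (hf.pow_const _).mul hv)]
    -- step 2 : chain
    have hchain : lam * GQ ^ s * Kp ≤ CA * I := by
      rw [mul_comm Kp] at hstep1
      exact le_trans (mul_le_mul_left (hlam.trans (lintegral_mono_set hsub)) Kp) hstep1
    -- Kp = GP^(-s) * Gu^(1/q)
    have hKp : Kp = GP ^ (-s) * Gu ^ (1/q) := by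
      rw [hKpdef, ENNReal.mul_rpow_of_nonneg _ _ hqinv.le, ENNReal.inv_rpow,
        ← ENNReal.rpow_neg, ← mul_assoc, ← ENNReal.rpow_add _ _ hGP0.ne' hGPt]
      congr 2
      rw [hsdef]
      ring
    rw [hKp] at hchain
    -- multiply both sides by GP^s
    have hchain2 : lam * GQ ^ s * Gu ^ (1/q) ≤ CA * I * GP ^ s := by
      have h1 := mul_le_mul_left hchain (GP ^ s)
      calc lam * GQ ^ s * Gu ^ (1/q)
          = lam * GQ ^ s * (GP ^ (-s) * Gu ^ (1/q)) * GP ^ s := by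
            rw [show lam * GQ ^ s * (GP ^ (-s) * Gu ^ (1/q)) * GP ^ s
              = lam * GQ ^ s * Gu ^ (1/q) * (GP ^ (-s) * GP ^ s) by ring,
              ← ENNReal.rpow_add _ _ hGP0.ne' hGPt, neg_add_cancel, ENNReal.rpow_zero, mul_one]
        _ ≤ CA * I * GP ^ s := h1
    -- GP^s ≤ D^s * GQ^s
    have hGPs : GP ^ s ≤ D ^ s * GQ ^ s := by
      calc GP ^ s ≤ (D * GQ) ^ s := ENNReal.rpow_le_rpow hdb hs.le
        _ = D ^ s * GQ ^ s := ENNReal.mul_rpow_of_nonneg _ _ hs.le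
    have hchain3 : lam * Gu ^ (1/q) * GQ ^ s ≤ (CA * D ^ s * I) * GQ ^ s := by
      calc lam * Gu ^ (1/q) * GQ ^ s = lam * GQ ^ s * Gu ^ (1/q) := by ring
        _ ≤ CA * I * GP ^ s := hchain2
        _ ≤ CA * I * (D ^ s * GQ ^ s) := mul_le_mul_right hGPs _
        _ = (CA * D ^ s * I) * GQ ^ s := by ring
    have hGQs0 : GQ ^ s ≠ 0 := by
      simp only [ne_eq, ENNReal.rpow_eq_zero_iff, not_or, not_and]
      exact ⟨fun h => absurd h hGQ0.ne', fun h => absurd h hGQt⟩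
    have hGQst : GQ ^ s ≠ ∞ := (ENNReal.rpow_lt_top_of_nonneg hs.le hGQt).ne
    have hfinal := (ENNReal.mul_le_mul_iff_left hGQs0 hGQst).mp hchain3
    calc lam * Gu ^ (1/q) ≤ CA * D ^ s * I := hfinal
      _ = (CA * D ^ s) * I ^ ((1:ℝ)/1) := by rw [div_one, ENNReal.rpow_one]
      _ ≤ (CA * D ^ s + 1) * I ^ ((1:ℝ)/1) := by
          exact mul_le_mul_left le_self_add _
  · -- ============ p > 1 ============
    have hp' : 1 < p := lt_of_le_of_ne hp (Ne.symm hp1)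
    have hP0 : p ≠ 0 := by linarith
    have hPm1 : p - 1 ≠ 0 := by linarith
    have hpinv : 0 < 1/p := by positivity
    have hpcpos : 0 < pconj p := by
      rw [pconj]; exact div_pos (by linarith) (by linarith)
    have hpcinv : 0 < 1/(pconj p) := by positivity
    have hpcsum : 1/p + 1/(pconj p) = 1 := by
      rw [pconj]; field_simp
      ring
    have hpc1 : 1 < pconj p := by
      rw [pconj, lt_div_iff₀ (by linarith : (0:ℝ) < p - 1)]
      linarith
    rw [APair, if_neg hp1] at hA
    set CA := Aconst d b' p q α u v with hCAdef
    have hCAtop : CA ≠ ∞ := hA.ne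
    refine ⟨CA * D ^ s + 1, ENNReal.add_ne_top.mpr ⟨ENNReal.mul_ne_top hCAtop (ENNReal.rpow_lt_top_of_nonneg hs.le hDtop).ne, ENNReal.one_ne_top⟩, ?_⟩
    intro f hf hf0 lam c l hQ hlam
    obtain ⟨hPadm, hsub, hGQ0, hGQt, hGP0, hGPt, hdb⟩ := hfacts c l hQ
    set GQ := gaussianM d (cube d c l) with hGQdef
    set GP := gaussianM d (cube d c (k*l)) with hGPdef
    set Gu := ∫⁻ x in cube d c (k*l), u x ∂(gaussianM d) with hGudef
    set Gσ := ∫⁻ x in cube d c (k*l), v x ^ (1 - pconj p) ∂(gaussianM d) with hGσdef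
    set I := ∫⁻ x in cube d c (k*l), f x ^ p * v x ∂(gaussianM d) with hIdef
    by_cases hGu0 : Gu = 0
    · rw [hGu0, ENNReal.zero_rpow_of_pos hqinv, mul_zero]
      exact zero_le
    -- A-condition rearranged
    have hT := le_Aconst (p := p) (u := u) (v := v) (q := q) (α := α) hPadm
    have hT' : GP ^ (-s) * (Gu ^ (1/q) * Gσ ^ (1/(pconj p))) ≤ CA := by
      refine le_trans (le_of_eq ?_) hT
      rw [ENNReal.mul_rpow_of_nonneg GP⁻¹ Gu hqinv.le,
        ENNReal.mul_rpow_of_nonneg GP⁻¹ Gσ hpcinv.le,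
        ENNReal.inv_rpow, ENNReal.inv_rpow, ← ENNReal.rpow_neg, ← ENNReal.rpow_neg]
      rw [show GP ^ (-s) * (Gu ^ (1/q) * Gσ ^ (1/(pconj p)))
        = (GP ^ (-s) * Gu ^ (1/q)) * Gσ ^ (1/(pconj p)) by ring]
      rw [show GP ^ (α/d + 1/q - 1/p) * (GP ^ (-(1/q)) * Gu ^ (1/q)) *
          (GP ^ (-(1/(pconj p))) * Gσ ^ (1/(pconj p)))
        = (GP ^ (α/d + 1/q - 1/p) * GP ^ (-(1/q)) * GP ^ (-(1/(pconj p))) * Gu ^ (1/q))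
            * Gσ ^ (1/(pconj p)) by ring]
      congr 2
      rw [← ENNReal.rpow_add _ _ hGP0.ne' hGPt, ← ENNReal.rpow_add _ _ hGP0.ne' hGPt]
      congr 1
      rw [hsdef]
      linarith [hpcsum]
    have hTmain : Gu ^ (1/q) * Gσ ^ (1/(pconj p)) ≤ CA * GP ^ s := by
      have h1 := mul_le_mul_right hT' (GP ^ s)
      rw [← mul_assoc, ← ENNReal.rpow_add _ _ hGP0.ne' hGPt, add_neg_cancel,
        ENNReal.rpow_zero, one_mul] at h1
      calc Gu ^ (1/q) * Gσ ^ (1/(pconj p)) ≤ GP ^ s * CA := h1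
        _ = CA * GP ^ s := mul_comm _ _
    by_cases hGσtop : Gσ = ∞
    · exfalso
      rw [hGσtop] at hTmain
      have hTopPow : (∞ : ℝ≥0∞) ^ (1/(pconj p)) = ∞ := ENNReal.top_rpow_of_pos hpcinv
      rw [hTopPow] at hTmain
      have hGu0' : Gu ^ (1/q) ≠ 0 := by
        simp only [ne_eq, ENNReal.rpow_eq_zero_iff, not_or, not_and]
        exact ⟨fun h => absurd h hGu0, fun _ h => absurd h (by linarith)⟩
      rw [ENNReal.mul_top hGu0'] at hTmain
      have : CA * GP ^ s ≠ ∞ :=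
        ENNReal.mul_ne_top hCAtop (ENNReal.rpow_lt_top_of_nonneg hs.le hGPt).ne
      exact this (top_le_iff.mp hTmain)
    -- v ≠ 0 a.e. on P
    have h1mpc : 1 - pconj p < 0 := by linarith
    have h0 : (gaussianM d) (cube d c (k*l) ∩ {x | v x = 0}) = 0 := by
      by_contra hbad
      apply hGσtop
      have hbadm : MeasurableSet (cube d c (k*l) ∩ {x | v x = 0}) :=
        (measurableSet_cube _ _).inter (hv (measurableSet_singleton 0))
      have hup : ∫⁻ x in cube d c (k*l) ∩ {x | v x = 0}, v x ^ (1 - pconj p) ∂(gaussianM d)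
          ≤ Gσ := lintegral_mono_set inter_subset_left
      have heq : ∫⁻ x in cube d c (k*l) ∩ {x | v x = 0}, v x ^ (1 - pconj p) ∂(gaussianM d)
          = ∞ := by
        rw [setLIntegral_congr_fun hbadm (fun x hx => ?_), setLIntegral_const,
          ENNReal.top_mul hbad]
        rw [hx.2, ENNReal.zero_rpow_of_neg h1mpc]
      rw [heq] at hup
      exact top_le_iff.mp hup
    -- Hölder
    have hH : ∫⁻ y in cube d c (k*l), f y ∂(gaussianM d) ≤
        I ^ (1/p) * Gσ ^ (1/(pconj p)) :=
      holder_cube hp' (measurableSet_cube _ _) hf hv hf0 h0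
    -- chain
    have hchain : lam * GQ ^ s * Gu ^ (1/q) ≤ I ^ (1/p) * (CA * GP ^ s) := by
      calc lam * GQ ^ s * Gu ^ (1/q)
          ≤ (I ^ (1/p) * Gσ ^ (1/(pconj p))) * Gu ^ (1/q) :=
            mul_le_mul_left ((hlam.trans (lintegral_mono_set hsub)).trans hH) _
        _ = I ^ (1/p) * (Gu ^ (1/q) * Gσ ^ (1/(pconj p))) := by ring
        _ ≤ I ^ (1/p) * (CA * GP ^ s) := mul_le_mul_right hTmain _
    have hGPs : GP ^ s ≤ D ^ s * GQ ^ s := by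
      calc GP ^ s ≤ (D * GQ) ^ s := ENNReal.rpow_le_rpow hdb hs.le
        _ = D ^ s * GQ ^ s := ENNReal.mul_rpow_of_nonneg _ _ hs.le
    have hchain3 : lam * Gu ^ (1/q) * GQ ^ s ≤ ((CA * D ^ s) * I ^ (1/p)) * GQ ^ s := by
      calc lam * Gu ^ (1/q) * GQ ^ s = lam * GQ ^ s * Gu ^ (1/q) := by ring
        _ ≤ I ^ (1/p) * (CA * GP ^ s) := hchain
        _ ≤ I ^ (1/p) * (CA * (D ^ s * GQ ^ s)) := by
            exact mul_le_mul_right (mul_le_mul_right hGPs _) _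
        _ = ((CA * D ^ s) * I ^ (1/p)) * GQ ^ s := by ring
    have hGQs0 : GQ ^ s ≠ 0 := by
      simp only [ne_eq, ENNReal.rpow_eq_zero_iff, not_or, not_and]
      exact ⟨fun h => absurd h hGQ0.ne', fun h => absurd h hGQt⟩
    have hGQst : GQ ^ s ≠ ∞ := (ENNReal.rpow_lt_top_of_nonneg hs.le hGQt).ne
    have hfinal := (ENNReal.mul_le_mul_iff_left hGQs0 hGQst).mp hchain3
    exact hfinal.trans (mul_le_mul_left le_self_add _)

end C2

-- ======== helpers ========
lemma tsum_rpow_le {ι : Type*} (A : ι → ℝ≥0∞) {t : ℝ} (ht : 1 ≤ t) :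
    ∑' i, A i ^ t ≤ (∑' i, A i) ^ t := by
  have ht0 : 0 < t := by linarith
  set S := ∑' i, A i with hS
  rcases eq_or_ne S ∞ with hStop | hSfin
  · rw [hStop, ENNReal.top_rpow_of_pos ht0]
    exact le_top
  rcases eq_or_ne S 0 with hS0 | hS0
  · have hA0 : ∀ i, A i = 0 := by
      intro i
      have := ENNReal.le_tsum (f := A) i
      rw [← hS, hS0] at this
      exact le_antisymm this (zero_le)
    calc ∑' i, A i ^ t = ∑' _i : ι, (0:ℝ≥0∞) := by
          apply tsum_congr
          intro i
          rw [hA0 i, ENNReal.zero_rpow_of_pos ht0]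
      _ = 0 := by simp
      _ ≤ S ^ t := zero_le
  have hterm : ∀ i, A i ^ t ≤ S ^ (t - 1) * A i := by
    intro i
    rcases eq_or_ne (A i) 0 with h0 | h0
    · rw [h0, ENNReal.zero_rpow_of_pos ht0, mul_zero]
    have hle : A i ≤ S := ENNReal.le_tsum i
    have hfin : A i ≠ ∞ := fun h => hSfin (by rw [← top_le_iff, ← h]; exact hle)
    have hsplit : A i ^ (t - 1) * A i = A i ^ t := by
      nth_rewrite 2 [← ENNReal.rpow_one (A i)]
      rw [← ENNReal.rpow_add _ _ h0 hfin]
      congr 1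
      ring
    calc A i ^ t = A i ^ (t - 1) * A i := hsplit.symm
      _ ≤ S ^ (t - 1) * A i :=
          mul_le_mul_left (ENNReal.rpow_le_rpow hle (by linarith)) _
  calc ∑' i, A i ^ t ≤ ∑' i, S ^ (t-1) * A i := ENNReal.tsum_le_tsum hterm
    _ = S ^ (t-1) * S := by rw [ENNReal.tsum_mul_left]
    _ = S ^ t := by
        nth_rewrite 2 [← ENNReal.rpow_one S]
        rw [← ENNReal.rpow_add _ _ hS0 hSfin]
        congr 1
        ring

lemma tsum_setLIntegral_le {d : ℕ} {ι : Type*} [Countable ι] {P : ι → Set (E d)}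
    (hP : ∀ i, MeasurableSet (P i)) {g : E d → ℝ≥0∞} (hg : Measurable g) {N : ℕ}
    (hover : ∀ z : E d, {i | z ∈ P i}.encard ≤ N) :
    ∑' i, ∫⁻ x in P i, g x ∂(gaussianM d) ≤ N * ∫⁻ x, g x ∂(gaussianM d) := by
  classical
  have h1 : ∀ i, ∫⁻ x in P i, g x ∂(gaussianM d)
      = ∫⁻ x, (P i).indicator g x ∂(gaussianM d) := by
    intro i
    rw [lintegral_indicator (hP i)]
  simp only [h1]
  rw [← lintegral_tsum (fun i => (hg.indicator (hP i)).aemeasurable)]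
  have hpt : ∀ z, ∑' i, (P i).indicator g z ≤ (N : ℝ≥0∞) * g z := by
    intro z
    rw [ENNReal.tsum_eq_iSup_sum]
    apply iSup_le
    intro F
    have hcard : (F.filter fun i => z ∈ P i).card ≤ N := by
      have hsub : ((F.filter fun i => z ∈ P i) : Set ι) ⊆ {i | z ∈ P i} := by
        intro i hi
        simp only [Finset.coe_filter, mem_setOf_eq] at hi
        exact hi.2
      have := (Set.encard_mono hsub).trans (hover z)
      rw [Set.encard_coe_eq_coe_finsetCard] at this
      exact_mod_cast this
    calc ∑ i ∈ F, (P i).indicator g z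
        = ∑ i ∈ F.filter (fun i => z ∈ P i), g z := by
          rw [Finset.sum_filter]
          apply Finset.sum_congr rfl
          intro i _
          by_cases h : z ∈ P i <;> simp [Set.indicator_apply, h]
      _ = (F.filter fun i => z ∈ P i).card * g z := by
          rw [Finset.sum_const, nsmul_eq_mul]
      _ ≤ (N : ℝ≥0∞) * g z := by
          exact mul_le_mul_left (by exact_mod_cast hcard) _
  calc ∫⁻ z, ∑' i, (P i).indicator g z ∂(gaussianM d)
      ≤ ∫⁻ z, (N : ℝ≥0∞) * g z ∂(gaussianM d) := lintegral_mono hpt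
    _ = N * ∫⁻ z, g z ∂(gaussianM d) := lintegral_const_mul _ hg


/-- Two-weight weak-type bound for the local fractional maximal operator: if
`(u,v) ∈ A^{b'}_{p,q,α}` for some `b' > a`, then `M^a_α : L^p(v dγ) → L^{q,∞}(u dγ)`. -/
theorem Mloc_weak_type (d : ℕ) (a b' p q α : ℝ) (ha : 0 < a) (hab : a < b')
    (hp : 1 ≤ p) (hpq : p ≤ q) (hα : 0 ≤ α) (hαd : α < d)
    (u v : E d → ℝ≥0∞) (hu : Measurable u) (hv : Measurable v)
    (hA : APair d b' p q α u v) :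
    ∃ C : ℝ≥0∞, C ≠ ∞ ∧ ∀ (f : E d → ℝ≥0∞), Measurable f → ∀ lam : ℝ≥0∞, 0 < lam →
      ∫⁻ x in {x | lam < Mloc d a α f x}, u x ∂(gaussianM d) ≤
        C * lam ^ (-q) * (∫⁻ x, f x ^ p * v x ∂(gaussianM d)) ^ (q/p) := by
  classical
  have hd0 : (0:ℝ) < d := lt_of_le_of_lt hα hαd
  have hd : 0 < d := by
    rcases Nat.eq_zero_or_pos d with h | h
    · subst h; norm_num at hd0
    · exact h
  have hb' : (0:ℝ) < b' := lt_trans ha hab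
  have hp0 : (0:ℝ) < p := by linarith
  have hq0 : (0:ℝ) < q := by linarith
  have hqp1 : 1 ≤ q / p := (one_le_div hp0).mpr hpq
  have hs : 0 < 1 - α/d := by
    have : α/d < 1 := (div_lt_one hd0).mpr hαd
    linarith
  obtain ⟨C₁, hC₁top, hC₁⟩ := percube ha hab hp hpq hα hαd hu hv hA
  have hθ0 : 0 ≤ a / b' := by positivity
  have hθ1 : a / b' < 1 := (div_lt_one hb').mpr hab
  obtain ⟨N, hcovN⟩ := cube_covering hd hθ0 hθ1
  set C : ℝ≥0∞ := C₁ ^ q * (N:ℝ≥0∞) ^ (q/p) + 1 with hCdef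
  have hCtop : C ≠ ∞ := by
    apply ENNReal.add_ne_top.mpr
    constructor
    · exact ENNReal.mul_ne_top (ENNReal.rpow_lt_top_of_nonneg hq0.le hC₁top).ne
        (ENNReal.rpow_lt_top_of_nonneg (by positivity) (ENNReal.natCast_ne_top N)).ne
    · exact ENNReal.one_ne_top
  refine ⟨C, hCtop, ?_⟩
  intro f hf lam hlam
  rcases eq_or_ne lam ∞ with rfl | hlamtop
  · have hempty : {x | (⊤:ℝ≥0∞) < Mloc d a α f x} = ∅ := by
      ext x
      simp [not_top_lt]
    rw [hempty, Measure.restrict_empty, lintegral_zero_measure]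
    exact zero_le
  set I := ∫⁻ x, f x ^ p * v x ∂(gaussianM d) with hIdef
  rcases eq_or_ne I ∞ with hItop | hIfin
  · rw [hItop, ENNReal.top_rpow_of_pos (by positivity : (0:ℝ) < q/p)]
    have hC0 : C ≠ 0 := by
      rw [hCdef]
      simp
    have hlamq : lam ^ (-q) ≠ 0 := by
      simp only [ne_eq, ENNReal.rpow_eq_zero_iff, not_or, not_and]
      exact ⟨fun h => absurd h hlam.ne', fun h => absurd h hlamtop⟩
    rw [ENNReal.mul_top (mul_ne_zero hC0 hlamq)]
    exact le_top
  -- truncate f on {v = ∞}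
  set f' : E d → ℝ≥0∞ := fun x => if v x = ∞ then 0 else f x with hf'def
  have hf'meas : Measurable f' := Measurable.ite (hv (measurableSet_singleton ∞))
    measurable_const hf
  have hf'le : ∀ x, f' x ≤ f x := by
    intro x
    by_cases h : v x = ∞ <;> simp [hf'def, h]
  have hf'0 : ∀ x, v x = ∞ → f' x = 0 := by
    intro x h
    simp [hf'def, h]
  have hfae : f' =ᵐ[gaussianM d] f := by
    have hSmeas : MeasurableSet ({x | v x = ∞} ∩ {x | f x ≠ 0}) :=
      (hv (measurableSet_singleton ∞)).inter (hf (measurableSet_singleton 0)).compl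
    have hS0 : gaussianM d ({x | v x = ∞} ∩ {x | f x ≠ 0}) = 0 := by
      by_contra hS
      apply hIfin
      have hge : ∫⁻ x in {x | v x = ∞} ∩ {x | f x ≠ 0}, f x ^ p * v x ∂(gaussianM d) ≤ I :=
        setLIntegral_le_lintegral _ _
      have heq : ∫⁻ x in {x | v x = ∞} ∩ {x | f x ≠ 0}, f x ^ p * v x ∂(gaussianM d) = ∞ := by
        rw [setLIntegral_congr_fun hSmeas (fun x hx => ?_), setLIntegral_const,
          ENNReal.top_mul hS]
        have hfx : f x ^ p ≠ 0 := by
          simp only [ne_eq, ENNReal.rpow_eq_zero_iff, not_or, not_and]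
          exact ⟨fun h => absurd h hx.2, fun _ h => absurd h (by linarith)⟩
        rw [hx.1, ENNReal.mul_top hfx]
      rw [heq] at hge
      exact top_le_iff.mp hge
    rw [Filter.EventuallyEq, ae_iff]
    apply measure_mono_null _ hS0
    intro x hx
    simp only [mem_setOf_eq] at hx ⊢
    by_cases h : v x = ∞
    · refine ⟨h, ?_⟩
      intro hfx
      apply hx
      simp [hf'def, h, hfx]
    · exact absurd (by simp [hf'def, h]) hx
  -- the superlevel set and witnesses
  set Elam := {x | lam < Mloc d a α f x} with hEdef
  have hwit : ∀ x ∈ Elam, ∃ w : E d × ℝ, (adm d a w.1 w.2 ∧ x ∈ cube d w.1 w.2) ∧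
      lam * (gaussianM d (cube d w.1 w.2)) ^ (1 - α/d)
        ≤ ∫⁻ y in cube d w.1 w.2, f' y ∂(gaussianM d) := by
    intro x hx
    simp only [hEdef, mem_setOf_eq, Mloc] at hx
    obtain ⟨c, hx⟩ := lt_iSup_iff.mp hx
    obtain ⟨l, hx⟩ := lt_iSup_iff.mp hx
    obtain ⟨hcl, hx⟩ := lt_iSup_iff.mp hx
    refine ⟨(c, l), hcl, ?_⟩
    have hlb' : l ≤ b' * mfun c := by
      have := hcl.1.2
      have hm := mfun_pos c
      nlinarith
    have hG0 : 0 < gaussianM d (cube d c l) := gauss_cube_pos hb' hcl.1.1 hlb'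
    have hGt : gaussianM d (cube d c l) ≠ ∞ := gauss_cube_ne_top hb' hcl.1.1 hlb'
    have hff' : ∫⁻ y in cube d c l, f y ∂(gaussianM d)
        = ∫⁻ y in cube d c l, f' y ∂(gaussianM d) :=
      (lintegral_congr_ae (ae_restrict_of_ae hfae)).symm
    calc lam * (gaussianM d (cube d c l)) ^ (1 - α/d)
        ≤ (gaussianM d (cube d c l) ^ (α/d - 1) * ∫⁻ y in cube d c l, f y ∂(gaussianM d))
            * (gaussianM d (cube d c l)) ^ (1 - α/d) := mul_le_mul_left hx.le _
      _ = (∫⁻ y in cube d c l, f y ∂(gaussianM d)) *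
            (gaussianM d (cube d c l) ^ (α/d - 1) * gaussianM d (cube d c l) ^ (1 - α/d)) := by
          ring
      _ = ∫⁻ y in cube d c l, f y ∂(gaussianM d) := by
          rw [← ENNReal.rpow_add _ _ hG0.ne' hGt]
          rw [show α/d - 1 + (1 - α/d) = 0 by ring, ENNReal.rpow_zero, mul_one]
      _ = ∫⁻ y in cube d c l, f' y ∂(gaussianM d) := hff'
  choose! W hWmem hWineq using hwit
  set cc : E d → E d := fun x => (W x).1 with hccdef
  set ll : E d → ℝ := fun x => (W x).2 with hlldef
  have hR0' : ∀ x ∈ Elam, 0 < b'/a * ll x / 2 := by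
    intro x hx
    have h0 : 0 < ll x := (hWmem x hx).1.1
    positivity
  have hRB' : ∀ x ∈ Elam, b'/a * ll x / 2 ≤ b'/2 := by
    intro x hx
    have h1 : ll x ≤ a * mfun (cc x) := (hWmem x hx).1.2
    have h2 := mfun_le_one (cc x)
    have h3 := mfun_pos (cc x)
    have h4 : ll x ≤ a := by nlinarith
    have h5 : 0 < b'/a := by positivity
    have h6 : b'/a * ll x ≤ b'/a * a := mul_le_mul_of_nonneg_left h4 h5.le
    have h7 : b'/a * a = b' := div_mul_cancel₀ b' (ne_of_gt ha)
    linarith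
  have hmem' : ∀ x ∈ Elam, ∀ i, |x i - cc x i| ≤ a/b' * (b'/a * ll x / 2) := by
    intro x hx i
    have h1 := (hWmem x hx).2 i
    have heq : a / b' * (b'/a * ll x / 2) = ll x / 2 := by
      field_simp
      try ring
    rw [heq]
    exact h1
  obtain ⟨ι, hιsub, hιcount, hcov, hover⟩ := hcovN (B := b'/2) (by positivity) Elam cc
      (fun x => b'/a * ll x / 2) hR0' hRB' hmem'
  -- bound the measure
  have hEsub : Elam ⊆ ⋃ x ∈ ι, cube d (cc x) (b'/a * ll x) := by
    intro y hy
    obtain ⟨x, hxι, hx⟩ := hcov y hy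
    refine mem_biUnion hxι ?_
    intro i
    exact hx i
  have hUmeas : MeasurableSet (⋃ x ∈ ι, cube d (cc x) (b'/a * ll x)) :=
    MeasurableSet.biUnion hιcount fun x _ => measurableSet_cube _ _
  have hcnt : Countable ↥ι := hιcount.to_subtype
  have hLHS : ∫⁻ x in Elam, u x ∂(gaussianM d)
      ≤ ∑' (x : ι), ∫⁻ y in cube d (cc x) (b'/a * ll x), u y ∂(gaussianM d) := by
    calc ∫⁻ x in Elam, u x ∂(gaussianM d)
        ≤ ∫⁻ x in ⋃ x ∈ ι, cube d (cc x) (b'/a * ll x), u x ∂(gaussianM d) :=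
          lintegral_mono' (Measure.restrict_mono hEsub le_rfl) le_rfl
      _ = ((gaussianM d).withDensity u) (⋃ x ∈ ι, cube d (cc x) (b'/a * ll x)) :=
          (withDensity_apply u hUmeas).symm
      _ ≤ ∑' (x : ι), ((gaussianM d).withDensity u) (cube d (cc x) (b'/a * ll x)) :=
          measure_biUnion_le _ hιcount _
      _ = ∑' (x : ι), ∫⁻ y in cube d (cc x) (b'/a * ll x), u y ∂(gaussianM d) := by
          apply tsum_congr
          intro x
          exact withDensity_apply u (measurableSet_cube _ _)
  -- per-cube estimate
  have hper : ∀ x : ι, (∫⁻ y in cube d (cc x) (b'/a * ll x), u y ∂(gaussianM d))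
      ≤ lam ^ (-q) * C₁ ^ q *
        (∫⁻ y in cube d (cc x) (b'/a * ll x), f' y ^ p * v y ∂(gaussianM d)) ^ (q/p) := by
    intro x
    have hxE : (x : E d) ∈ Elam := hιsub x.2
    have h1 := hC₁ f' hf'meas hf'0 lam (cc x) (ll x) (hWmem x hxE).1 (hWineq x hxE)
    set Gu := ∫⁻ y in cube d (cc x) (b'/a * ll x), u y ∂(gaussianM d) with hGudef
    set Ix := ∫⁻ y in cube d (cc x) (b'/a * ll x), f' y ^ p * v y ∂(gaussianM d) with hIxdef
    have h2 : Gu ^ (1/q) ≤ lam⁻¹ * (C₁ * Ix ^ (1/p)) := by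
      have h3 := mul_le_mul_right h1 lam⁻¹
      rwa [← mul_assoc, ENNReal.inv_mul_cancel hlam.ne' hlamtop, one_mul] at h3
    have h4 : Gu = (Gu ^ (1/q)) ^ q := by
      rw [← ENNReal.rpow_mul, one_div, inv_mul_cancel₀ (by linarith : q ≠ 0),
        ENNReal.rpow_one]
    rw [h4]
    calc (Gu ^ (1/q)) ^ q ≤ (lam⁻¹ * (C₁ * Ix ^ (1/p))) ^ q :=
          ENNReal.rpow_le_rpow h2 hq0.le
      _ = lam ^ (-q) * C₁ ^ q * Ix ^ (q/p) := by
          rw [ENNReal.mul_rpow_of_nonneg _ _ hq0.le, ENNReal.mul_rpow_of_nonneg _ _ hq0.le,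
            ENNReal.inv_rpow, ← ENNReal.rpow_neg, ← ENNReal.rpow_mul]
          rw [show 1/p * q = q/p by ring, mul_assoc]
    done
  -- overlap
  have hover' : ∀ z : E d,
      {i : ↥ι | z ∈ cube d (cc (i:E d)) (b'/a * ll (i:E d))}.encard ≤ N := by
    intro z
    refine le_trans (encard_le_of_injOn_mapsTo (F := fun i : ↥ι => (i : E d))
      (fun i _ j _ h => Subtype.ext h) ?_) (hover z)
    intro i hi
    simp only [mem_setOf_eq] at hi ⊢
    exact ⟨i.2, fun j => hi j⟩
  have hoversum : ∑' (x : ι), (∫⁻ y in cube d (cc x) (b'/a * ll x), f' y ^ p * v y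
      ∂(gaussianM d)) ≤ (N : ℝ≥0∞) * ∫⁻ y, f' y ^ p * v y ∂(gaussianM d) :=
    tsum_setLIntegral_le (fun i => measurableSet_cube _ _)
      ((hf'meas.pow_const _).mul hv) hover'
  have hI'le : ∫⁻ y, f' y ^ p * v y ∂(gaussianM d) ≤ I := by
    apply lintegral_mono
    intro y
    exact mul_le_mul_left (ENNReal.rpow_le_rpow (hf'le y) hp0.le) _
  -- put everything together
  calc ∫⁻ x in Elam, u x ∂(gaussianM d)
      ≤ ∑' (x : ι), ∫⁻ y in cube d (cc x) (b'/a * ll x), u y ∂(gaussianM d) := hLHS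
    _ ≤ ∑' (x : ι), lam ^ (-q) * C₁ ^ q *
        (∫⁻ y in cube d (cc x) (b'/a * ll x), f' y ^ p * v y ∂(gaussianM d)) ^ (q/p) :=
        ENNReal.tsum_le_tsum hper
    _ = lam ^ (-q) * C₁ ^ q * ∑' (x : ι),
        (∫⁻ y in cube d (cc x) (b'/a * ll x), f' y ^ p * v y ∂(gaussianM d)) ^ (q/p) :=
        ENNReal.tsum_mul_left
    _ ≤ lam ^ (-q) * C₁ ^ q * (∑' (x : ι),
        ∫⁻ y in cube d (cc x) (b'/a * ll x), f' y ^ p * v y ∂(gaussianM d)) ^ (q/p) :=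
        mul_le_mul_right (tsum_rpow_le _ hqp1) _
    _ ≤ lam ^ (-q) * C₁ ^ q * ((N : ℝ≥0∞) * I) ^ (q/p) := by
        apply mul_le_mul_right
        apply ENNReal.rpow_le_rpow _ (by positivity)
        exact hoversum.trans (mul_le_mul_right hI'le _)
    _ = (C₁ ^ q * (N:ℝ≥0∞) ^ (q/p)) * lam ^ (-q) * I ^ (q/p) := by
        rw [ENNReal.mul_rpow_of_nonneg _ _ (by positivity : (0:ℝ) ≤ q/p)]
        ring
    _ ≤ C * lam ^ (-q) * I ^ (q/p) := by
        apply mul_le_mul_left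
        apply mul_le_mul_left
        rw [hCdef]
        exact le_self_add

end
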